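/- Let V_r and V_s be the Weyl modules for quantum sl2 over Z[q, q^{-1}] with standard bases {v_0,...,v_r} and {v_0,...,v_s}. For 0 ≤ b ≤ r and 0 ≤ d ≤ s with a = r − b and c = s − d, define v_b ◇ v_d := Σ_{j=0}^d q^{j(j+c)} [b+j choose j] v_{b+j} ⊗ v_{d−j} if b ≤ c, and v_b ◇ v_d := Σ_{j=0}^a q^{j(j+b)} [c+j choose j] v_{b+j} ⊗ v_{d−j} if b ≥ c (the two formulas agree when b = c). Then {v_b ◇ v_d : 0 ≤ b ≤ r, 0 ≤ d ≤ s} is a basis of V_r ⊗ V_s, and v_b ◇ v_d = F^{(d)}(v_b ⊗ v_0) when b ≤ c, and v_b ◇ v_d = E^{(a)}(v_r ⊗ v_d) when b ≥ c. -/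

import Mathlib

open Finset LaurentPolynomial

namespace Stmt14

/-- The ground ring `ℤ[q, q⁻¹]` of Laurent polynomials. -/
abbrev R := LaurentPolynomial ℤ

/-- The monomial `q^z`. -/
noncomputable def q (z : ℤ) : R := LaurentPolynomial.T z

/-- The balanced quantum integer `[n] = q^{n−1} + q^{n−3} + ⋯ + q^{1−n}`. -/
noncomputable def qnat (n : ℕ) : R :=
  ∑ i ∈ Finset.range n, q ((n : ℤ) - 1 - 2 * (i : ℤ))

/-- The quantum factorial `[n]!`. -/
noncomputable def qfact : ℕ → R
  | 0 => 1
  | n + 1 => qfact n * qnat (n + 1)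

/-- The underlying module of `V_r ⊗ V_s`, with standard basis indexed by pairs. -/
abbrev W (r s : ℕ) := Fin (r + 1) × Fin (s + 1) → R

/-- The standard basis vector `v_b ⊗ v_d` (zero if out of range). -/
noncomputable def sv (r s : ℕ) (b d : ℕ) : W r s :=
  if h : b ≤ r ∧ d ≤ s then
    Pi.single (⟨b, by omega⟩, ⟨d, by omega⟩) (1 : R) else 0

/-- `F^{(t)}(v_b ⊗ v_d)`, computed via the divided-power comultiplication
`Δ(F^{(t)}) = Σ_j q^{−j(t−j)} F^{(t−j)} ⊗ F^{(j)} K^{t−j}` and the Weyl module action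
`F^{(m)} v_i = [i+m choose m] v_{i+m}`, `K v_i = q^{l−2i} v_i`. -/
noncomputable def Fdiv (qb : ℕ → ℕ → R) (r s t b d : ℕ) : W r s :=
  ∑ j ∈ Finset.range (t + 1),
    (q (-((j : ℤ) * ((t : ℤ) - (j : ℤ))) + ((t : ℤ) - (j : ℤ)) * ((s : ℤ) - 2 * (d : ℤ)))
      * qb (b + (t - j)) (t - j) * qb (d + j) j) • sv r s (b + (t - j)) (d + j)

/-- `E^{(t)}(v_b ⊗ v_d)`, computed via
`Δ(E^{(t)}) = Σ_j q^{−j(t−j)} E^{(t−j)} K^{−j} ⊗ E^{(j)}` and the Weyl module action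
`E^{(m)} v_i = [l−i+m choose m] v_{i−m}` (zero if `m > i`). -/
noncomputable def Ediv (qb : ℕ → ℕ → R) (r s t b d : ℕ) : W r s :=
  ∑ j ∈ Finset.range (t + 1),
    if t - j ≤ b ∧ j ≤ d then
      (q (-((j : ℤ) * ((t : ℤ) - (j : ℤ))) - (j : ℤ) * ((r : ℤ) - 2 * (b : ℤ)))
        * qb ((r - b) + (t - j)) (t - j) * qb ((s - d) + j) j)
          • sv r s (b - (t - j)) (d - j)
    else 0

/-- The sum `Σ_{j=0}^d q^{j(j+c)} [b+j choose j] v_{b+j} ⊗ v_{d−j}`  (`c = s − d`). -/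
noncomputable def can₁ (qb : ℕ → ℕ → R) (r s b d : ℕ) : W r s :=
  ∑ j ∈ Finset.range (d + 1),
    (q ((j : ℤ) * ((j : ℤ) + ((s : ℤ) - (d : ℤ)))) * qb (b + j) j) •
      sv r s (b + j) (d - j)

/-- The sum `Σ_{j=0}^a q^{j(j+b)} [c+j choose j] v_{b+j} ⊗ v_{d−j}`  (`a = r − b`,
`c = s − d`). -/
noncomputable def can₂ (qb : ℕ → ℕ → R) (r s b d : ℕ) : W r s :=
  ∑ j ∈ Finset.range ((r - b) + 1),
    if j ≤ d then
      (q ((j : ℤ) * ((j : ℤ) + (b : ℤ))) * qb ((s - d) + j) j) •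
        sv r s (b + j) (d - j)
    else 0


instance : IsDomain R := NoZeroDivisors.to_isDomain _

lemma q_zero : q 0 = 1 := T_zero

lemma qnat_ne_zero (n : ℕ) (h : 0 < n) : qnat n ≠ 0 := by
  intro hc
  have h1 : (qnat n).coeff ((n : ℤ) - 1) = 1 := by
    unfold qnat q
    rw [AddMonoidAlgebra.coeff_sum, Finsupp.finset_sum_apply]
    rw [Finset.sum_eq_single_of_mem 0 (Finset.mem_range.2 h)]
    · simp
    · intro i _ hi
      rw [T_apply, if_neg (by omega)]
  rw [hc] at h1
  simp at h1

lemma qfact_ne_zero (n : ℕ) : qfact n ≠ 0 := by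
  induction n with
  | zero => exact one_ne_zero
  | succ k ih => exact mul_ne_zero ih (qnat_ne_zero _ (Nat.succ_pos k))

lemma sv_of_gt' {r s b d : ℕ} (h : r < b) : sv r s b d = 0 := dif_neg (by omega)

lemma sv_eq' (r s : ℕ) (p : Fin (r+1) × Fin (s+1)) :
    sv r s p.1 p.2 = Pi.single p 1 := by
  rw [sv, dif_pos ⟨Nat.lt_succ_iff.1 p.1.isLt, Nat.lt_succ_iff.1 p.2.isLt⟩]

section qb
variable (qb : ℕ → ℕ → R)
  (hqb : ∀ n k : ℕ, k ≤ n → qb n k * qfact k * qfact (n - k) = qfact n)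

include hqb

lemma qb_zero (n : ℕ) : qb n 0 = 1 := by
  have := hqb n 0 (Nat.zero_le n)
  simp only [qfact, mul_one, Nat.sub_zero] at this
  exact mul_right_cancel₀ (qfact_ne_zero n) (by rw [this, one_mul])

lemma qb_self (n : ℕ) : qb n n = 1 := by
  have := hqb n n le_rfl
  simp only [Nat.sub_self, qfact, mul_one] at this
  exact mul_right_cancel₀ (qfact_ne_zero n) (by rw [this, one_mul])

end qb

section parts
variable (qb : ℕ → ℕ → R) (hself : ∀ n, qb n n = 1)
include hself

lemma part1 (r s b d : ℕ) (hd : d ≤ s) :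
    can₁ qb r s b d = Fdiv qb r s d b 0 := by
  rw [can₁, ← Finset.sum_range_reflect, Fdiv]
  refine Finset.sum_congr rfl fun j hj => ?_
  rw [Finset.mem_range] at hj
  have hj' : j ≤ d := by omega
  simp only [Nat.add_sub_cancel, Nat.zero_add, hself, mul_one]
  have h2 : d - (d - j) = j := by omega
  have h3 : ((d - j : ℕ) : ℤ) * (((d - j : ℕ) : ℤ) + ((s : ℤ) - (d : ℤ)))
      = -((j : ℤ) * ((d : ℤ) - (j : ℤ))) + ((d : ℤ) - (j : ℤ)) * ((s : ℤ) - 2 * ((0 : ℕ) : ℤ)) := by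
    push_cast [Nat.cast_sub hj']
    ring
  rw [h2, h3]

lemma part2 (r s b d : ℕ) (hb : b ≤ r) (hd : d ≤ s) (hc : s - d ≤ b) :
    can₂ qb r s b d = Ediv qb r s (r - b) r d := by
  rw [can₂, Ediv]
  refine Finset.sum_congr rfl fun j hj => ?_
  rw [Finset.mem_range] at hj
  have hj' : j ≤ r - b := by omega
  by_cases hjd : j ≤ d
  · rw [if_pos hjd, if_pos ⟨by omega, hjd⟩]
    have h1 : r - r + (r - b - j) = r - b - j := by omega
    have h2 : r - (r - b - j) = b + j := by omega
    have h3 : ((j : ℤ) * ((j : ℤ) + (b : ℤ)))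
        = -((j : ℤ) * (((r - b : ℕ) : ℤ) - (j : ℤ))) - (j : ℤ) * ((r : ℤ) - 2 * (r : ℤ)) := by
      push_cast [Nat.cast_sub hb]
      ring
    rw [h1, hself, mul_one, h2, h3]
  · rw [if_neg hjd, if_neg (by tauto)]

omit hself in
lemma part3 (r s b d : ℕ) (hb : b ≤ r) (hd : d ≤ s) (he : b = s - d) :
    can₁ qb r s b d = can₂ qb r s b d := by
  have hsd : (s : ℤ) - (d : ℤ) = (b : ℤ) := by omega
  set g : ℕ → W r s := fun j =>
    if j ≤ d then
      (q ((j : ℤ) * ((j : ℤ) + (b : ℤ))) * qb ((s - d) + j) j) • sv r s (b + j) (d - j)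
    else 0 with hg
  have h1 : can₁ qb r s b d = ∑ j ∈ Finset.range (d + (r - b) + 1), g j := by
    rw [can₁]
    calc ∑ j ∈ Finset.range (d + 1),
          (q ((j : ℤ) * ((j : ℤ) + ((s : ℤ) - (d : ℤ)))) * qb (b + j) j) • sv r s (b + j) (d - j)
        = ∑ j ∈ Finset.range (d + 1), g j := by
          refine Finset.sum_congr rfl fun j hj => ?_
          rw [Finset.mem_range] at hj
          rw [hg]
          simp only
          rw [if_pos (by omega : j ≤ d), hsd, ← he]
      _ = ∑ j ∈ Finset.range (d + (r - b) + 1), g j := by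
          refine Finset.sum_subset (Finset.range_subset_range.2 (by omega)) fun j _ hj => ?_
          rw [Finset.mem_range] at hj
          rw [hg]
          simp only
          rw [if_neg (by omega)]
  have h2 : can₂ qb r s b d = ∑ j ∈ Finset.range (d + (r - b) + 1), g j := by
    rw [can₂]
    refine Finset.sum_subset (Finset.range_subset_range.2 (by omega)) fun j _ hj => ?_
    rw [Finset.mem_range] at hj
    by_cases hjd : j ≤ d
    · rw [if_pos hjd, sv_of_gt' (by omega), smul_zero]
    · rw [if_neg hjd]
  rw [h1, h2]

end parts

lemma mem_span_aux (qb : ℕ → ℕ → R) (hz : ∀ n, qb n 0 = 1) (r s : ℕ)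
    (S : Submodule R (W r s))
    (hmem : ∀ b d : ℕ, b ≤ r → d ≤ s →
      (if b ≤ s - d then can₁ qb r s b d else can₂ qb r s b d) ∈ S) :
    ∀ b d : ℕ, b ≤ r → d ≤ s → sv r s b d ∈ S := by
  have key : ∀ b d : ℕ, b ≤ r → d ≤ s →
      (∀ j d', 1 ≤ j → b + j ≤ r → d' ≤ s → sv r s (b + j) d' ∈ S) →
      sv r s b d ∈ S := by
    intro b d hb hd hrec
    by_cases hbc : b ≤ s - d
    · have h0 := hmem b d hb hd
      rw [if_pos hbc, can₁, Finset.sum_range_succ'] at h0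
      simp only [Nat.cast_zero, zero_mul, q_zero, Nat.add_zero, Nat.sub_zero, hz,
        one_mul, mul_one, one_smul] at h0
      refine (Submodule.add_mem_iff_right _ ?_).1 h0
      refine Submodule.sum_mem S fun j hj => Submodule.smul_mem S _ ?_
      by_cases hjr : b + (j + 1) ≤ r
      · exact hrec (j + 1) (d - (j + 1)) (by omega) hjr (by omega)
      · rw [sv_of_gt' (by omega)]; exact S.zero_mem
    · have h0 := hmem b d hb hd
      rw [if_neg hbc, can₂, Finset.sum_range_succ', if_pos (Nat.zero_le d)] at h0
      simp only [Nat.cast_zero, zero_mul, q_zero, Nat.add_zero, Nat.sub_zero, hz,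
        one_mul, mul_one, one_smul] at h0
      refine (Submodule.add_mem_iff_right _ ?_).1 h0
      refine Submodule.sum_mem S fun j hj => ?_
      by_cases hjd : j + 1 ≤ d
      · rw [if_pos hjd]
        refine Submodule.smul_mem S _ ?_
        by_cases hjr : b + (j + 1) ≤ r
        · exact hrec (j + 1) (d - (j + 1)) (by omega) hjr (by omega)
        · rw [sv_of_gt' (by omega)]; exact S.zero_mem
      · rw [if_neg hjd]; exact S.zero_mem
  suffices H : ∀ a b d : ℕ, b ≤ r → d ≤ s → r - b ≤ a → sv r s b d ∈ S by
    exact fun b d hb hd => H (r - b) b d hb hd le_rfl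
  intro a
  induction a with
  | zero =>
    intro b d hb hd hba
    exact key b d hb hd (fun j d' hj hbj hd' => absurd hbj (by omega))
  | succ a ih =>
    intro b d hb hd hba
    exact key b d hb hd (fun j d' hj hbj hd' => ih (b + j) d' hbj hd' (by omega))

lemma basis_aux (qb : ℕ → ℕ → R) (hz : ∀ n, qb n 0 = 1) (r s : ℕ) :
    ∃ B : Module.Basis (Fin (r + 1) × Fin (s + 1)) R (W r s),
      ∀ p : Fin (r + 1) × Fin (s + 1),
        B p = if (p.1 : ℕ) ≤ s - (p.2 : ℕ) then can₁ qb r s p.1 p.2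
              else can₂ qb r s p.1 p.2 := by
  classical
  set u : Fin (r + 1) × Fin (s + 1) → W r s := fun p =>
    if (p.1 : ℕ) ≤ s - (p.2 : ℕ) then can₁ qb r s p.1 p.2 else can₂ qb r s p.1 p.2 with hu
  have hspan : ∀ b d : ℕ, b ≤ r → d ≤ s → sv r s b d ∈ Submodule.span R (Set.range u) := by
    refine mem_span_aux qb hz r s _ fun b d hb hd => ?_
    refine Submodule.subset_span ⟨(⟨b, by omega⟩, ⟨d, by omega⟩), ?_⟩
    rw [hu]
  have htop : Submodule.span R (Set.range u) = ⊤ := by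
    rw [eq_top_iff, ← (Pi.basisFun R (Fin (r + 1) × Fin (s + 1))).span_eq, Submodule.span_le]
    rintro _ ⟨p, rfl⟩
    rw [Pi.basisFun_apply, ← sv_eq' r s p]
    exact hspan p.1 p.2 (Nat.lt_succ_iff.1 p.1.isLt) (Nat.lt_succ_iff.1 p.2.isLt)
  let bf := Pi.basisFun R (Fin (r + 1) × Fin (s + 1))
  let f : W r s →ₗ[R] W r s := bf.constr ℕ u
  have hs : Function.Surjective f := by
    rw [← LinearMap.range_eq_top, eq_top_iff, ← htop, Submodule.span_le]
    rintro _ ⟨p, rfl⟩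
    exact ⟨bf p, bf.constr_basis ℕ u p⟩
  have hi : Function.Injective f :=
    OrzechProperty.injective_of_surjective_endomorphism f hs
  refine ⟨bf.map (LinearEquiv.ofBijective f ⟨hi, hs⟩), fun p => ?_⟩
  rw [Module.Basis.map_apply]
  show f (bf p) = _
  rw [bf.constr_basis]

end Stmt14


open Stmt14 in
/-- For the Weyl modules `V_r`, `V_s` of quantum `sl2` over `ℤ[q,q⁻¹]`,
the elements `v_b ◇ v_d` (defined by the displayed sums, using the quantum binomial
coefficients `qb`, characterized by `[n choose k]·[k]!·[n−k]! = [n]!`) satisfy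
`v_b ◇ v_d = F^{(d)}(v_b ⊗ v_0)` when `b ≤ c`, and `v_b ◇ v_d = E^{(a)}(v_r ⊗ v_d)` when
`b ≥ c` (where `a = r − b`, `c = s − d`), the two formulas agree when `b = c`, and the
family `{v_b ◇ v_d}` is a basis of `V_r ⊗ V_s`. -/
theorem stmt_14 (r s : ℕ) (qb : ℕ → ℕ → R)
    (hqb : ∀ n k : ℕ, k ≤ n → qb n k * qfact k * qfact (n - k) = qfact n)
    (hqb0 : ∀ n k : ℕ, n < k → qb n k = 0) :
    (∀ b d : ℕ, b ≤ r → d ≤ s →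
      (b ≤ s - d → can₁ qb r s b d = Fdiv qb r s d b 0) ∧
      (s - d ≤ b → can₂ qb r s b d = Ediv qb r s (r - b) r d) ∧
      (b = s - d → can₁ qb r s b d = can₂ qb r s b d)) ∧
    ∃ B : Module.Basis (Fin (r + 1) × Fin (s + 1)) R (W r s),
      ∀ p : Fin (r + 1) × Fin (s + 1),
        B p = if (p.1 : ℕ) ≤ s - (p.2 : ℕ) then can₁ qb r s p.1 p.2
              else can₂ qb r s p.1 p.2 :=  by
  have hz := qb_zero qb hqb
  have hself := qb_self qb hqb
  constructor
  · intro b d hb hd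
    exact ⟨fun _ => part1 qb hself r s b d hd,
      fun hc => part2 qb hself r s b d hb hd hc,
      fun he => part3 qb r s b d hb hd he⟩
  · exact basis_aux qb hz r s
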